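/- The price of fairness of Seat Arrangement is unbounded: for every real c > 0 there exists an instance of Seat Arrangement with four agents, nonnegative preferences, and seat graph equal to the disjoint union of two edges, such that every maximin arrangement π_f satisfies sw(π_f) > 0 and every maximum arrangement π* satisfies sw(π*) > c · sw(π_f). -/

import Mathlib

open scoped Classical

noncomputable section

namespace SeatArrangement

variable {P V : Type*}

/-- The utility of agent `p` under arrangement `π`:
the sum, over the seat-graph neighbors `v` of `π p`, of `p`'s preference for the agent seated
at `v`. -/
def utility [Fintype V] (G : SimpleGraph V) (f : P → P → ℝ) (π : P ≃ V) (p : P) : ℝ :=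
  ∑ v : V, if G.Adj (π p) v then f p (π.symm v) else 0

/-- The social welfare of an arrangement: the sum of the utilities of all agents. -/
def sw [Fintype P] [Fintype V] (G : SimpleGraph V) (f : P → P → ℝ) (π : P ≃ V) : ℝ :=
  ∑ p : P, utility G f π p

/-- The `(p,q)`-swap arrangement of `π`. -/
def swapArr (π : P ≃ V) (p q : P) : P ≃ V := (Equiv.swap p q).trans π

/-- `{p, q}` is a blocking pair for `π`: both agents strictly improve by swapping seats. -/
def blocking [Fintype V] (G : SimpleGraph V) (f : P → P → ℝ) (π : P ≃ V) (p q : P) : Prop :=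
  p ≠ q ∧ utility G f π p < utility G f (swapArr π p q) p
        ∧ utility G f π q < utility G f (swapArr π p q) q

/-- An arrangement is stable if it has no blocking pair. -/
def stable [Fintype V] (G : SimpleGraph V) (f : P → P → ℝ) (π : P ≃ V) : Prop :=
  ∀ p q : P, ¬ blocking G f π p q

/-- An arrangement is envy-free if no agent would strictly improve by taking
another agent's seat (via a swap). -/
def envyFree [Fintype V] (G : SimpleGraph V) (f : P → P → ℝ) (π : P ≃ V) : Prop :=
  ∀ p q : P, p ≠ q → utility G f (swapArr π p q) p ≤ utility G f π p

/-- The least utility of an agent under `π` (for a finite nonempty set of agents, the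
infimum of the range of utilities is the minimum utility). -/
def minUtil [Fintype V] (G : SimpleGraph V) (f : P → P → ℝ) (π : P ≃ V) : ℝ :=
  sInf (Set.range (utility G f π))

/-- A maximin arrangement maximizes the least utility of an agent. -/
def maximin [Fintype V] (G : SimpleGraph V) (f : P → P → ℝ) (πf : P ≃ V) : Prop :=
  ∀ π : P ≃ V, minUtil G f π ≤ minUtil G f πf

/-- A maximum arrangement maximizes the social welfare. -/
def maximum [Fintype P] [Fintype V] (G : SimpleGraph V) (f : P → P → ℝ) (πm : P ≃ V) : Prop :=
  ∀ π : P ≃ V, sw G f π ≤ sw G f πm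

end SeatArrangement

open SeatArrangement

/-- The seat graph that is the disjoint union of the two edges `{0,1}` and `{2,3}`. -/
def twoEdges : SimpleGraph (Fin 4) where
  Adj i j := (i = 0 ∧ j = 1) ∨ (i = 1 ∧ j = 0) ∨ (i = 2 ∧ j = 3) ∨ (i = 3 ∧ j = 2)
  symm := by
    constructor
    rintro i j (⟨h1, h2⟩ | ⟨h1, h2⟩ | ⟨h1, h2⟩ | ⟨h1, h2⟩) <;> subst h1 <;> subst h2 <;> simp
  loopless := by
    constructor
    rintro i (⟨h1, h2⟩ | ⟨h1, h2⟩ | ⟨h1, h2⟩ | ⟨h1, h2⟩) <;> subst h1 <;> exact absurd h2 (by decide)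
def mate : Fin 4 → Fin 4 := ![1,0,3,2]

lemma utility_eq (f : Fin 4 → Fin 4 → ℝ) (π : Fin 4 ≃ Fin 4) (p : Fin 4) :
    utility twoEdges f π p = f p (π.symm (mate (π p))) := by
  have h4 : ∀ x : Fin 4, x = 0 ∨ x = 1 ∨ x = 2 ∨ x = 3 := by decide
  unfold utility
  rw [Fin.sum_univ_four]
  rcases h4 (π p) with h|h|h|h <;> rw [h] <;> simp [twoEdges, mate]

def gam (π : Fin 4 ≃ Fin 4) (p : Fin 4) : Fin 4 := π.symm (mate (π p))

lemma gam_gam (π : Fin 4 ≃ Fin 4) (p : Fin 4) : gam π (gam π p) = p := by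
  have hm : ∀ x, mate (mate x) = x := by decide
  simp [gam, hm]

lemma gam_ne (π : Fin 4 ≃ Fin 4) (p : Fin 4) : gam π p ≠ p := by
  have hm : ∀ x : Fin 4, mate x ≠ x := by decide
  simp only [gam, ne_eq]
  intro h
  have := π.apply_symm_apply (mate (π p))
  rw [h] at this
  exact hm (π p) this.symm

lemma sw_eq (f : Fin 4 → Fin 4 → ℝ) (π : Fin 4 ≃ Fin 4) :
    sw twoEdges f π = f 0 (gam π 0) + f 1 (gam π 1) + f 2 (gam π 2) + f 3 (gam π 3) := by
  unfold sw
  rw [Fin.sum_univ_four]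
  simp [utility_eq, gam]


/-- The price of fairness of Seat Arrangement is unbounded: for every `c > 0`
there is an instance with four agents, nonnegative preferences, and seat graph the disjoint
union of two edges, in which every maximin arrangement has positive social welfare and every
maximum arrangement has social welfare more than `c` times that of any maximin arrangement. -/
theorem pof_unbounded :
    ∀ c : ℝ, 0 < c → ∃ f : Fin 4 → Fin 4 → ℝ,
      (∀ p q : Fin 4, p ≠ q → 0 ≤ f p q) ∧
      (∀ πf : Fin 4 ≃ Fin 4, maximin twoEdges f πf →
        0 < sw twoEdges f πf ∧
        ∀ πm : Fin 4 ≃ Fin 4, maximum twoEdges f πm →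
          c * sw twoEdges f πf < sw twoEdges f πm) := by
  intro c hc
  set f : Fin 4 → Fin 4 → ℝ := fun p q =>
    if (p = 0 ∧ q = 1) ∨ (p = 1 ∧ q = 0) then 4 * c
    else if (p = 2 ∧ q = 3) ∨ (p = 3 ∧ q = 2) then 0 else 1 with hf
  refine ⟨f, ?_, ?_⟩
  · intro p q _
    simp only [hf]
    split_ifs <;> linarith
  intro πf hπf
  -- the good arrangement π0 = swap 1 2
  set π0 : Fin 4 ≃ Fin 4 := Equiv.swap 1 2 with hπ0
  have hu0 : ∀ p, utility twoEdges f π0 p = 1 := by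
    intro p
    have h4 : ∀ x : Fin 4, x = 0 ∨ x = 1 ∨ x = 2 ∨ x = 3 := by decide
    rcases h4 p with h|h|h|h <;> subst h <;>
      rw [utility_eq] <;> simp [hπ0, mate, hf, Equiv.swap_apply_def]
  have hmin0 : minUtil twoEdges f π0 = 1 := by
    unfold minUtil
    have : Set.range (utility twoEdges f π0) = {1} := by
      ext x; simp [hu0, eq_comm]
    rw [this, csInf_singleton]
  -- every agent under πf has utility ≥ 1
  have hge : ∀ p, 1 ≤ utility twoEdges f πf p := by
    intro p
    have h1 : (1:ℝ) ≤ minUtil twoEdges f πf := hmin0 ▸ hπf π0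
    refine le_trans h1 ?_
    exact csInf_le (Set.finite_range _).bddBelow (Set.mem_range_self p)
  -- analysis of partners
  have key : ∀ p, utility twoEdges f πf p = f p (gam πf p) := fun p => by
    rw [utility_eq]; rfl
  -- gam πf 2 ∈ {0, 1}
  have h2 : gam πf 2 = 0 ∨ gam πf 2 = 1 := by
    have h4 : ∀ x : Fin 4, x = 0 ∨ x = 1 ∨ x = 2 ∨ x = 3 := by decide
    rcases h4 (gam πf 2) with h|h|h|h
    · exact Or.inl h
    · exact Or.inr h
    · exact absurd h (gam_ne πf 2)
    · exfalso
      have := hge 2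
      rw [key 2, h] at this
      simp [hf] at this
      linarith
  have hswf : sw twoEdges f πf = 4 := by
    rcases h2 with h|h
    · have h0 : gam πf 0 = 2 := by rw [← h, gam_gam]
      have h3 : gam πf 3 = 1 := by
        have h4 : ∀ x : Fin 4, x = 0 ∨ x = 1 ∨ x = 2 ∨ x = 3 := by decide
        rcases h4 (gam πf 3) with h'|h'|h'|h'
        · exfalso
          have e : (3:Fin 4) = 2 := by rw [← gam_gam πf 3, h', ← h, gam_gam]
          exact absurd e (by decide)
        · exact h'
        · exfalso
          have := hge 3
          rw [key 3, h'] at this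
          simp [hf] at this
          linarith
        · exact absurd h' (gam_ne πf 3)
      have h1 : gam πf 1 = 3 := by rw [← h3, gam_gam]
      rw [sw_eq, h0, h1, h, h3]
      simp [hf]
      norm_num
    · have h1 : gam πf 1 = 2 := by rw [← h, gam_gam]
      have h3 : gam πf 3 = 0 := by
        have h4 : ∀ x : Fin 4, x = 0 ∨ x = 1 ∨ x = 2 ∨ x = 3 := by decide
        rcases h4 (gam πf 3) with h'|h'|h'|h'
        · exact h'
        · exfalso
          have e : (3:Fin 4) = 2 := by rw [← gam_gam πf 3, h', ← h, gam_gam]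
          exact absurd e (by decide)
        · exfalso
          have := hge 3
          rw [key 3, h'] at this
          simp [hf] at this
          linarith
        · exact absurd h' (gam_ne πf 3)
      have h0 : gam πf 0 = 3 := by rw [← h3, gam_gam]
      rw [sw_eq, h0, h1, h, h3]
      simp [hf]
      norm_num
  constructor
  · rw [hswf]; norm_num
  · intro πm hπm
    have hbad : sw twoEdges f (Equiv.refl (Fin 4)) = 8 * c := by
      rw [sw_eq]
      simp [gam, mate, hf]
      ring
    have := hπm (Equiv.refl (Fin 4))
    rw [hbad] at this
    rw [hswf]
    linarith
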